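/- Let p < 0 and λ > 0 with λ² > p·‖b‖₂²/(p − 2), let A ∈ ℝ^{m×n} have spectral norm ‖A‖ < 1, and let the IPS sequence be initialized with x⁰ = 0. Then the sequence {x^k} is bounded; in particular there is a t > 0, independent of k, with ‖x^k‖_∞ < t for all k ≥ 1. -/

import Mathlib

open MeasureTheory Filter
open scoped BigOperators

noncomputable section

/-- `l0 w` is the number of nonzero entries of `w`. -/
def l0 {n : ℕ} (w : Fin n → ℝ) : ℕ := (Finset.univ.filter fun i => w i ≠ 0).card

/-- Euclidean (`ℓ²`) norm of a vector. -/
def l2 {k : ℕ} (v : Fin k → ℝ) : ℝ := Real.sqrt (∑ i, v i ^ 2)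

/-- Restriction `h_T` of a vector to a finset `T` (zero outside `T`). -/
def restr {n : ℕ} (T : Finset (Fin n)) (h : Fin n → ℝ) : Fin n → ℝ :=
  fun i => if i ∈ T then h i else 0

/-- Unique Representation Property: every `m` columns of `A` are linearly independent. -/
def URP {m n : ℕ} (A : Matrix (Fin m) (Fin n) ℝ) : Prop :=
  ∀ S : Finset (Fin n), S.card = m →
    LinearIndependent ℝ (fun j : S => (fun i : Fin m => A i (j : Fin n)))

/-- Conditions (I)-(II) on the penalty component `g`. -/
def PenaltyConds (g : ℝ → ℝ) : Prop :=
  g 0 = 0 ∧ (∀ w, g (-w) = g w) ∧ Continuous g ∧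
    ((StrictMonoOn g (Set.Ioi 0) ∧ StrictConcaveOn ℝ (Set.Ioi 0) g) ∨
      (∃ γ : ℝ, 0 < γ ∧ StrictMonoOn g (Set.Ioc 0 γ) ∧
        StrictConcaveOn ℝ (Set.Ioc 0 γ) g ∧ ∀ w, γ ≤ w → g w = g γ))

/-- Spectral (`ℓ² → ℓ²` operator) norm of a matrix. -/
def specNorm {m n : ℕ} (A : Matrix (Fin m) (Fin n) ℝ) : ℝ :=
  sSup {c | ∃ v : Fin n → ℝ, l2 v ≤ 1 ∧ c = l2 (A.mulVec v)}

/-- The `p`-shrinkage function `s_{λ,p}`. -/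
def pshrinkFun (lam p t : ℝ) : ℝ :=
  if t ≤ 0 then 0 else max (t - lam ^ (2 - p) * t ^ (p - 1)) 0

/-- `f_p(x) = ∫₀ˣ s_{λ,p}(t) dt`. -/
def pf (lam p x : ℝ) : ℝ := ∫ t in (0 : ℝ)..x, pshrinkFun lam p t

/-- Legendre–Fenchel transform `f_p*(w) = sup_{x ≥ 0} (x·w − f_p(x))`. -/
def pfstar (lam p w : ℝ) : ℝ := sSup ((fun x => x * w - pf lam p x) '' Set.Ici 0)

/-- The induced `p`-shrinkage penalty component `g_p`. -/
def gp (lam p w : ℝ) : ℝ := (pfstar lam p |w| - w ^ 2 / 2) / lam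

/-- The induced `p`-shrinkage penalty `G_p`. -/
def Gp (lam p : ℝ) {n : ℕ} (w : Fin n → ℝ) : ℝ := ∑ i, gp lam p (w i)

/-- The `p`-shrinkage mapping `S_p`. -/
def Sp (lam p : ℝ) {n : ℕ} (x : Fin n → ℝ) : Fin n → ℝ :=
  fun i => pshrinkFun lam p |x i| * Real.sign (x i)

/-- The objective `F_p(x) = λ G_p(x) + ½‖Ax − b‖₂²`. -/
def Fp (lam p : ℝ) {m n : ℕ} (A : Matrix (Fin m) (Fin n) ℝ) (b : Fin m → ℝ)
    (x : Fin n → ℝ) : ℝ :=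
  lam * Gp lam p x + (1 / 2) * (l2 (A.mulVec x - b)) ^ 2

/-- Firm-thresholding penalty component. -/
def gfirm (μ w : ℝ) : ℝ := if |w| ≤ μ then |w| - w ^ 2 / (2 * μ) else μ / 2

/-- Firm-thresholding penalty. -/
def Gfirm (μ : ℝ) {n : ℕ} (w : Fin n → ℝ) : ℝ := ∑ i, gfirm μ (w i)

/-- The `m × m` submatrix `A_S` of the columns of `A` indexed by `S`. -/
def colsub {m n : ℕ} (A : Matrix (Fin m) (Fin n) ℝ)
    (S : {S : Finset (Fin n) // S.card = m}) : Matrix (Fin m) (Fin m) ℝ :=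
  Matrix.of fun i j => A i ((S.1.orderIsoOfFin S.2 j : Fin n))

/-- `α_S = ‖A_S⁻¹ b‖_{-∞}`. -/
def alphaS {m n : ℕ} (A : Matrix (Fin m) (Fin n) ℝ) (b : Fin m → ℝ)
    (S : {S : Finset (Fin n) // S.card = m}) : ℝ :=
  ⨅ i, |((colsub A S)⁻¹).mulVec b i|

/-- `β_S = ‖A_S⁻¹ b‖_∞`. -/
def betaS {m n : ℕ} (A : Matrix (Fin m) (Fin n) ℝ) (b : Fin m → ℝ)
    (S : {S : Finset (Fin n) // S.card = m}) : ℝ :=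
  ⨆ i, |((colsub A S)⁻¹).mulVec b i|

/-- `‖A_S⁻¹‖` (spectral norm). -/
def nrmInv {m n : ℕ} (A : Matrix (Fin m) (Fin n) ℝ)
    (S : {S : Finset (Fin n) // S.card = m}) : ℝ :=
  specNorm ((colsub A S)⁻¹)

/-! ### Scalar shrinkage facts -/

/-- The scalar shrinkage map on all of `ℝ`. -/
def Sf (lam p : ℝ) (y : ℝ) : ℝ := pshrinkFun lam p |y| * Real.sign y

lemma psh_nonneg (lam p t : ℝ) : 0 ≤ pshrinkFun lam p t := by
  unfold pshrinkFun; split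
  · exact le_rfl
  · exact le_max_right _ _

lemma psh_le (lam p : ℝ) (hlam : 0 < lam) {t : ℝ} (ht : 0 ≤ t) :
    pshrinkFun lam p t ≤ t := by
  unfold pshrinkFun; split
  · exact ht
  · refine max_le ?_ ht
    have h1 : 0 ≤ lam ^ (2 - p) := Real.rpow_nonneg hlam.le _
    have h2 : 0 ≤ t ^ (p - 1) := Real.rpow_nonneg ht _
    nlinarith

lemma psh_zero (lam p : ℝ) (hlam : 0 < lam) (hp : p < 0) {t : ℝ} (ht : t ≤ lam) :
    pshrinkFun lam p t = 0 := by
  unfold pshrinkFun; split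
  · rfl
  · rename_i h
    have ht0 : 0 < t := not_le.mp h
    refine max_eq_right ?_
    have h1 : t ^ (2 - p) ≤ lam ^ (2 - p) :=
      Real.rpow_le_rpow ht0.le ht (by linarith)
    have h2 : 0 < t ^ (p - 1) := Real.rpow_pos_of_pos ht0 _
    have h3 : t ^ (2 - p) * t ^ (p - 1) = t := by
      rw [← Real.rpow_add ht0]; norm_num
    nlinarith

lemma psh_eq (lam p : ℝ) (hlam : 0 < lam) (hp : p < 0) {t : ℝ} (ht : lam ≤ t) :
    pshrinkFun lam p t = t - lam ^ (2 - p) * t ^ (p - 1) := by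
  have ht0 : 0 < t := lt_of_lt_of_le hlam ht
  unfold pshrinkFun
  rw [if_neg (not_le.mpr ht0)]
  refine max_eq_left ?_
  have h1 : lam ^ (2 - p) ≤ t ^ (2 - p) :=
    Real.rpow_le_rpow hlam.le ht (by linarith)
  have h2 : 0 < t ^ (p - 1) := Real.rpow_pos_of_pos ht0 _
  have h3 : t ^ (2 - p) * t ^ (p - 1) = t := by
    rw [← Real.rpow_add ht0]; norm_num
  nlinarith

lemma psh_mono (lam p : ℝ) (hlam : 0 < lam) (hp : p < 0) {a b : ℝ}
    (ha : 0 ≤ a) (hab : a ≤ b) : pshrinkFun lam p a ≤ pshrinkFun lam p b := by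
  rcases eq_or_lt_of_le ha with h0 | h0
  · rw [show a = (0:ℝ) from h0.symm]
    have : pshrinkFun lam p 0 = 0 := by unfold pshrinkFun; rw [if_pos le_rfl]
    rw [this]; exact psh_nonneg lam p b
  · have hb0 : 0 < b := lt_of_lt_of_le h0 hab
    unfold pshrinkFun
    rw [if_neg (not_le.mpr h0), if_neg (not_le.mpr hb0)]
    refine max_le_max ?_ le_rfl
    have h1 : b ^ (p - 1) ≤ a ^ (p - 1) :=
      Real.rpow_le_rpow_of_nonpos h0 hab (by linarith)
    have h2 : 0 ≤ lam ^ (2 - p) := Real.rpow_nonneg hlam.le _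
    nlinarith

lemma Sf_of_nonneg (lam p : ℝ) {y : ℝ} (hy : 0 ≤ y) :
    Sf lam p y = pshrinkFun lam p y := by
  rcases eq_or_lt_of_le hy with h | h
  · rw [← h]; simp [Sf, pshrinkFun]
  · rw [Sf, abs_of_pos h, Real.sign_of_pos h, mul_one]

lemma Sf_neg (lam p y : ℝ) : Sf lam p (-y) = -Sf lam p y := by
  rw [Sf, Sf, abs_neg, Real.sign_neg]; ring

lemma Sf_nonneg (lam p : ℝ) {y : ℝ} (hy : 0 ≤ y) : 0 ≤ Sf lam p y := by
  rw [Sf_of_nonneg lam p hy]; exact psh_nonneg lam p y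

lemma Sf_le (lam p : ℝ) (hlam : 0 < lam) {y : ℝ} (hy : 0 ≤ y) : Sf lam p y ≤ y := by
  rw [Sf_of_nonneg lam p hy]; exact psh_le lam p hlam hy

lemma Sf_mono (lam p : ℝ) (hlam : 0 < lam) (hp : p < 0) : Monotone (Sf lam p) := by
  intro a b hab
  rcases le_total 0 a with ha | ha
  · rw [Sf_of_nonneg lam p ha, Sf_of_nonneg lam p (le_trans ha hab)]
    exact psh_mono lam p hlam hp ha hab
  · rcases le_total b 0 with hb | hb
    · have ea : Sf lam p a = - Sf lam p (-a) := by rw [Sf_neg, neg_neg]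
      have eb : Sf lam p b = - Sf lam p (-b) := by rw [Sf_neg, neg_neg]
      rw [ea, eb, neg_le_neg_iff]
      rw [Sf_of_nonneg lam p (by linarith), Sf_of_nonneg lam p (by linarith)]
      exact psh_mono lam p hlam hp (by linarith) (by linarith)
    · have ea : Sf lam p a = - Sf lam p (-a) := by rw [Sf_neg, neg_neg]
      have h1 : 0 ≤ Sf lam p (-a) := Sf_nonneg lam p (by linarith)
      have h2 : 0 ≤ Sf lam p b := Sf_nonneg lam p hb
      rw [ea]; linarith


/-! ### The envelope integral `M` -/

/-- `M y = ∫₀ʸ (t - S t) dt`. -/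
def Mf (lam p : ℝ) (y : ℝ) : ℝ := ∫ t in (0:ℝ)..y, (t - Sf lam p t)

lemma f_int (lam p : ℝ) (hlam : 0 < lam) (hp : p < 0) (a b : ℝ) :
    IntervalIntegrable (fun t => t - Sf lam p t) MeasureTheory.volume a b :=
  (continuous_id.intervalIntegrable a b).sub ((Sf_mono lam p hlam hp).intervalIntegrable)

lemma Mf_sub (lam p : ℝ) (hlam : 0 < lam) (hp : p < 0) (y z : ℝ) :
    Mf lam p z - Mf lam p y = ∫ t in y..z, (t - Sf lam p t) := by
  have := intervalIntegral.integral_add_adjacent_intervals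
    (f_int lam p hlam hp 0 y) (f_int lam p hlam hp y z)
  unfold Mf; linarith

lemma Mf_even (lam p : ℝ) (y : ℝ) : Mf lam p (-y) = Mf lam p y := by
  have h1 := intervalIntegral.integral_comp_neg (a := 0) (b := y)
    (fun t => t - Sf lam p t)
  have h2 : (fun x : ℝ => (fun t => t - Sf lam p t) (-x))
      = fun x : ℝ => -(x - Sf lam p x) := by
    funext x; simp only [Sf_neg]; ring
  rw [h2, intervalIntegral.integral_neg, neg_zero,
    intervalIntegral.integral_symm 0 (-y)] at h1
  unfold Mf
  linarith

lemma Mf_abs (lam p y : ℝ) : Mf lam p |y| = Mf lam p y := by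
  rcases abs_cases y with ⟨h, _⟩ | ⟨h, _⟩
  · rw [h]
  · rw [h, Mf_even]

lemma Mf_small (lam p : ℝ) (hlam : 0 < lam) (hp : p < 0) {y : ℝ}
    (h0 : 0 ≤ y) (hy : y ≤ lam) : Mf lam p y = y ^ 2 / 2 := by
  unfold Mf
  have h : Set.EqOn (fun t => t - Sf lam p t) (fun t => t) (Set.uIcc 0 y) := by
    intro t ht
    rw [Set.uIcc_of_le h0] at ht
    have ht1 : 0 ≤ t := ht.1
    have ht2 : t ≤ lam := le_trans ht.2 hy
    simp only
    rw [Sf_of_nonneg lam p ht1, psh_zero lam p hlam hp ht2, sub_zero]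
  rw [intervalIntegral.integral_congr h, integral_id]
  ring

lemma Mf_big (lam p : ℝ) (hlam : 0 < lam) (hp : p < 0) {y : ℝ} (hy : lam ≤ y) :
    Mf lam p y = lam ^ 2 / 2 - lam ^ 2 / p + lam ^ (2 - p) * y ^ p / p := by
  have hMlam : Mf lam p lam = lam ^ 2 / 2 := Mf_small lam p hlam hp hlam.le le_rfl
  have hdiff := Mf_sub lam p hlam hp lam y
  have hEq : Set.EqOn (fun t => t - Sf lam p t)
      (fun t => lam ^ (2 - p) * t ^ (p - 1)) (Set.uIcc lam y) := by
    intro t ht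
    rw [Set.uIcc_of_le hy] at ht
    have ht1 : lam ≤ t := ht.1
    have ht0 : 0 ≤ t := le_trans hlam.le ht1
    simp only
    rw [Sf_of_nonneg lam p ht0, psh_eq lam p hlam hp ht1]; ring
  rw [intervalIntegral.integral_congr hEq] at hdiff
  have hint : ∫ t in lam..y, lam ^ (2 - p) * t ^ (p - 1)
      = lam ^ (2 - p) * ((y ^ p - lam ^ p) / p) := by
    rw [intervalIntegral.integral_const_mul]
    have hr : ∫ t in lam..y, t ^ (p - 1) = (y ^ p - lam ^ p) / p := by
      rw [integral_rpow (Or.inr ⟨by intro h; linarith,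
        by rw [Set.uIcc_of_le hy]; exact fun hmem => absurd hmem.1 (by linarith)⟩)]
      norm_num
    rw [hr]
  rw [hint] at hdiff
  have hll : lam ^ (2 - p) * lam ^ p = lam ^ 2 := by
    rw [← Real.rpow_add hlam]
    norm_num
  rw [hMlam] at hdiff
  have hM : Mf lam p y = lam ^ 2 / 2 + lam ^ (2 - p) * ((y ^ p - lam ^ p) / p) := by
    linarith
  rw [hM]
  linear_combination (-(1/p)) * hll


/-! ### Bounds on `Mf`, and the penalty `lamh` -/

lemma Mf_nonneg (lam p : ℝ) (hlam : 0 < lam) (hp : p < 0) (y : ℝ) :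
    0 ≤ Mf lam p y := by
  have key : ∀ z : ℝ, 0 ≤ z → 0 ≤ Mf lam p z := by
    intro z hz
    unfold Mf
    apply intervalIntegral.integral_nonneg hz
    intro u hu
    have := Sf_le lam p hlam hu.1
    linarith
  rcases le_total 0 y with h | h
  · exact key y h
  · rw [← Mf_even]; exact key (-y) (by linarith)

lemma Mf_le_half_sq (lam p : ℝ) (hlam : 0 < lam) (hp : p < 0) (y : ℝ) :
    Mf lam p y ≤ y ^ 2 / 2 := by
  have key : ∀ z : ℝ, 0 ≤ z → Mf lam p z ≤ z ^ 2 / 2 := by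
    intro z hz
    have h1 : Mf lam p z ≤ ∫ t in (0:ℝ)..z, t := by
      apply intervalIntegral.integral_mono_on hz (f_int lam p hlam hp 0 z)
        (continuous_id.intervalIntegrable 0 z)
      intro u hu
      have := Sf_nonneg lam p hu.1
      simp only [id]
      linarith
    rw [integral_id] at h1
    linarith
  rcases le_total 0 y with h | h
  · exact key y h
  · rw [← Mf_even]
    have := key (-y) (by linarith)
    nlinarith [this]

lemma Mf_le_L (lam p : ℝ) (hlam : 0 < lam) (hp : p < 0) (y : ℝ) :
    Mf lam p y ≤ lam ^ 2 / 2 - lam ^ 2 / p := by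
  have key : ∀ z : ℝ, 0 ≤ z → Mf lam p z ≤ lam ^ 2 / 2 - lam ^ 2 / p := by
    intro z hz
    have hL2 : 0 ≤ - (lam ^ 2 / p) := by
      have : lam ^ 2 / p ≤ 0 := div_nonpos_of_nonneg_of_nonpos (sq_nonneg lam) hp.le
      linarith
    rcases le_total z lam with h | h
    · rw [Mf_small lam p hlam hp hz h]
      nlinarith
    · rw [Mf_big lam p hlam hp h]
      have h1 : 0 < lam ^ (2 - p) * z ^ p :=
        mul_pos (Real.rpow_pos_of_pos hlam _) (Real.rpow_pos_of_pos (lt_of_lt_of_le hlam h) _)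
      have h2 : lam ^ (2 - p) * z ^ p / p ≤ 0 :=
        div_nonpos_of_nonneg_of_nonpos h1.le hp.le
      linarith
  rcases le_total 0 y with h | h
  · exact key y h
  · rw [← Mf_even]; exact key (-y) (by linarith)

/-- The rescaled penalty `λ · g(w)`, defined as the conjugate-type sup. -/
def lamh (lam p : ℝ) (w : ℝ) : ℝ :=
  sSup (Set.range fun y => Mf lam p y - (w - y) ^ 2 / 2)

lemma lamh_bdd (lam p : ℝ) (hlam : 0 < lam) (hp : p < 0) (w : ℝ) :
    BddAbove (Set.range fun y => Mf lam p y - (w - y) ^ 2 / 2) := by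
  refine ⟨lam ^ 2 / 2 - lam ^ 2 / p, ?_⟩
  rintro c ⟨y, rfl⟩
  have h1 := Mf_le_L lam p hlam hp y
  have h2 : 0 ≤ (w - y) ^ 2 / 2 := by positivity
  simp only
  linarith

lemma lamh_ge (lam p : ℝ) (hlam : 0 < lam) (hp : p < 0) (w y : ℝ) :
    Mf lam p y - (w - y) ^ 2 / 2 ≤ lamh lam p w :=
  le_csSup (lamh_bdd lam p hlam hp w) (Set.mem_range_self y)

lemma Mf_zero (lam p : ℝ) : Mf lam p 0 = 0 := intervalIntegral.integral_same

lemma lamh_zero (lam p : ℝ) (hlam : 0 < lam) (hp : p < 0) : lamh lam p 0 = 0 := by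
  apply le_antisymm
  · apply csSup_le ⟨_, Set.mem_range_self 0⟩
    rintro c ⟨y, rfl⟩
    have h1 := Mf_le_half_sq lam p hlam hp y
    simp only
    nlinarith
  · have := lamh_ge lam p hlam hp 0 0
    rw [Mf_zero] at this
    simpa using this

lemma lamh_nonneg (lam p : ℝ) (hlam : 0 < lam) (hp : p < 0) (w : ℝ) :
    0 ≤ lamh lam p w := by
  have := lamh_ge lam p hlam hp w w
  have h2 := Mf_nonneg lam p hlam hp w
  simp only [sub_self] at this
  nlinarith [this]

lemma lamh_ge_M (lam p : ℝ) (hlam : 0 < lam) (hp : p < 0) (w : ℝ) :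
    Mf lam p w ≤ lamh lam p w := by
  have := lamh_ge lam p hlam hp w w
  simp only [sub_self] at this
  nlinarith [this]

/-! ### The prox inequality -/

lemma ips_integral_sub_const (v y z : ℝ) :
    ∫ t in y..z, (t - v) = (v - z) ^ 2 / 2 - (v - y) ^ 2 / 2 := by
  rw [intervalIntegral.integral_sub intervalIntegral.intervalIntegrable_id
    intervalIntegrable_const, integral_id, intervalIntegral.integral_const]
  simp only [smul_eq_mul]
  ring

lemma prox_key (lam p : ℝ) (hlam : 0 < lam) (hp : p < 0) (y z : ℝ) :
    Mf lam p z - Mf lam p y ≤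
      (Sf lam p y - z) ^ 2 / 2 - (Sf lam p y - y) ^ 2 / 2 := by
  set v := Sf lam p y with hv
  have hI : Mf lam p z - Mf lam p y = ∫ t in y..z, (t - Sf lam p t) :=
    Mf_sub lam p hlam hp y z
  have hC : ∫ t in y..z, (t - v) = (v - z) ^ 2 / 2 - (v - y) ^ 2 / 2 :=
    ips_integral_sub_const v y z
  rw [hI, ← hC]
  rcases le_total y z with h | h
  · apply intervalIntegral.integral_mono_on h (f_int lam p hlam hp y z)
      ((continuous_id.sub continuous_const).intervalIntegrable y z)
    intro u hu
    have := Sf_mono lam p hlam hp hu.1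
    show u - Sf lam p u ≤ u - v
    linarith [hv]
  · rw [intervalIntegral.integral_symm z y, intervalIntegral.integral_symm z y
      (f := fun t => t - v), neg_le_neg_iff]
    apply intervalIntegral.integral_mono_on h
      ((continuous_id.sub continuous_const).intervalIntegrable z y)
      (f_int lam p hlam hp z y)
    intro u hu
    have := Sf_mono lam p hlam hp hu.2
    show u - v ≤ u - Sf lam p u
    linarith [hv]

lemma prox_ineq (lam p : ℝ) (hlam : 0 < lam) (hp : p < 0) (y v : ℝ) :
    (Sf lam p y - y) ^ 2 / 2 + lamh lam p (Sf lam p y) ≤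
      (v - y) ^ 2 / 2 + lamh lam p v := by
  have h1 : Mf lam p y - (v - y) ^ 2 / 2 ≤ lamh lam p v :=
    lamh_ge lam p hlam hp v y
  have h2 : lamh lam p (Sf lam p y) ≤ Mf lam p y - (Sf lam p y - y) ^ 2 / 2 := by
    apply csSup_le ⟨_, Set.mem_range_self 0⟩
    rintro c ⟨z, rfl⟩
    have := prox_key lam p hlam hp y z
    simp only
    nlinarith [this]
  linarith


/-! ### Linear algebra facts -/

lemma l2_nonneg {k : ℕ} (v : Fin k → ℝ) : 0 ≤ l2 v := Real.sqrt_nonneg _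

lemma l2_sq {k : ℕ} (v : Fin k → ℝ) : l2 v ^ 2 = ∑ i, v i ^ 2 :=
  Real.sq_sqrt (Finset.sum_nonneg fun i _ => sq_nonneg _)

lemma l2_zero {k : ℕ} : l2 (0 : Fin k → ℝ) = 0 := by
  unfold l2; simp

lemma l2_smul {k : ℕ} (c : ℝ) (v : Fin k → ℝ) : l2 (c • v) = |c| * l2 v := by
  unfold l2
  have h : ∑ i, (c • v) i ^ 2 = c ^ 2 * ∑ i, v i ^ 2 := by
    rw [Finset.mul_sum]
    refine Finset.sum_congr rfl fun i _ => ?_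
    simp [Pi.smul_apply, smul_eq_mul]; ring
  rw [h, Real.sqrt_mul (sq_nonneg c), Real.sqrt_sq_eq_abs]

lemma l2_eq_zero {k : ℕ} {v : Fin k → ℝ} (h : l2 v = 0) : v = 0 := by
  have h2 : ∑ i, v i ^ 2 = 0 := by
    have := l2_sq v
    rw [h] at this
    simpa using this.symm
  funext i
  have : ∀ j ∈ Finset.univ, (0:ℝ) ≤ v j ^ 2 := fun j _ => sq_nonneg _
  have hz := (Finset.sum_eq_zero_iff_of_nonneg this).mp h2 i (Finset.mem_univ i)
  have : v i ^ 2 = 0 := hz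
  simpa [pow_eq_zero_iff] using this

lemma specNorm_bound {m n : ℕ} (A : Matrix (Fin m) (Fin n) ℝ) (v : Fin n → ℝ) :
    l2 (A.mulVec v) ≤ specNorm A * l2 v := by
  -- Frobenius bound for membership set
  set Frob : ℝ := Real.sqrt (∑ i, ∑ j, A i j ^ 2) with hF
  have hFb : ∀ w : Fin n → ℝ, l2 w ≤ 1 → l2 (A.mulVec w) ≤ Frob := by
    intro w hw
    have hw2 : ∑ j, w j ^ 2 ≤ 1 := by
      have := l2_sq w
      nlinarith [l2_nonneg w]
    have hsum : ∑ i, (A.mulVec w) i ^ 2 ≤ ∑ i, ∑ j, A i j ^ 2 := by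
      apply Finset.sum_le_sum
      intro i _
      have hcs := Finset.sum_mul_sq_le_sq_mul_sq Finset.univ (fun j => A i j) w
      have : (A.mulVec w) i = ∑ j, A i j * w j := by
        simp [Matrix.mulVec, dotProduct]
      rw [this]
      calc (∑ j, A i j * w j) ^ 2 ≤ (∑ j, A i j ^ 2) * ∑ j, w j ^ 2 := hcs
        _ ≤ (∑ j, A i j ^ 2) * 1 := by
            apply mul_le_mul_of_nonneg_left hw2
            exact Finset.sum_nonneg fun j _ => sq_nonneg _
        _ = ∑ j, A i j ^ 2 := mul_one _
    unfold l2
    exact Real.sqrt_le_sqrt hsum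
  have hbdd : BddAbove {c | ∃ w : Fin n → ℝ, l2 w ≤ 1 ∧ c = l2 (A.mulVec w)} := by
    refine ⟨Frob, ?_⟩
    rintro c ⟨w, hw, rfl⟩
    exact hFb w hw
  by_cases hv : l2 v = 0
  · have : v = 0 := l2_eq_zero hv
    rw [this, Matrix.mulVec_zero, l2_zero, l2_zero]
    simp
  · have hvpos : 0 < l2 v := lt_of_le_of_ne (l2_nonneg v) (Ne.symm hv)
    set r : ℝ := l2 v
    have hu : l2 ((r⁻¹) • v) = 1 := by
      rw [l2_smul, abs_of_pos (inv_pos.mpr hvpos)]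
      field_simp
      rfl
    have hmem : l2 (A.mulVec ((r⁻¹) • v)) ∈
        {c | ∃ w : Fin n → ℝ, l2 w ≤ 1 ∧ c = l2 (A.mulVec w)} :=
      ⟨(r⁻¹) • v, le_of_eq hu, rfl⟩
    have hle : l2 (A.mulVec ((r⁻¹) • v)) ≤ specNorm A := le_csSup hbdd hmem
    rw [Matrix.mulVec_smul, l2_smul, abs_of_pos (inv_pos.mpr hvpos)] at hle
    calc l2 (A.mulVec v) = r * (r⁻¹ * l2 (A.mulVec v)) := by field_simp
      _ ≤ r * specNorm A := by
          apply mul_le_mul_of_nonneg_left hle hvpos.le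
      _ = specNorm A * r := mul_comm _ _

lemma mulVec_sq_le {m n : ℕ} (A : Matrix (Fin m) (Fin n) ℝ) (hA : specNorm A < 1)
    (d : Fin n → ℝ) : ∑ i, (A.mulVec d) i ^ 2 ≤ ∑ j, d j ^ 2 := by
  have h1 : l2 (A.mulVec d) ≤ specNorm A * l2 d := specNorm_bound A d
  have h2 : specNorm A * l2 d ≤ 1 * l2 d :=
    mul_le_mul_of_nonneg_right hA.le (l2_nonneg d)
  have h3 : l2 (A.mulVec d) ≤ l2 d := by linarith
  have := l2_sq (A.mulVec d)
  have := l2_sq d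
  nlinarith [l2_nonneg (A.mulVec d), l2_nonneg d]


/-- The Lyapunov objective. -/
def Fobj (lam p : ℝ) {m n : ℕ} (A : Matrix (Fin m) (Fin n) ℝ) (b : Fin m → ℝ)
    (x : Fin n → ℝ) : ℝ :=
  (∑ i, lamh lam p (x i)) + (∑ i, ((A.mulVec x - b) i) ^ 2) / 2

lemma ips_descent (lam p : ℝ) (hlam : 0 < lam) (hp : p < 0) {m n : ℕ}
    (A : Matrix (Fin m) (Fin n) ℝ) (hA : specNorm A < 1) (b : Fin m → ℝ)
    (x : Fin n → ℝ) :
    Fobj lam p A b (Sp lam p (x - A.transpose.mulVec (A.mulVec x - b))) ≤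
      Fobj lam p A b x := by
  set r : Fin m → ℝ := A.mulVec x - b with hr
  set g : Fin n → ℝ := A.transpose.mulVec r with hg
  set y : Fin n → ℝ := x - g with hy
  set x' : Fin n → ℝ := Sp lam p y with hx'
  set d : Fin n → ℝ := fun i => x' i - x i with hd
  have hmv : ∀ (v : Fin n → ℝ) (i : Fin m), A.mulVec v i = ∑ j, A i j * v j := by
    intro v i; simp [Matrix.mulVec, dotProduct]
  have hxd : x' = x + d := by funext j; simp [hd]
  have hcoord : ∀ i, (A.mulVec x' - b) i = r i + A.mulVec d i := by
    intro i
    rw [hxd, Matrix.mulVec_add]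
    simp only [Pi.sub_apply, Pi.add_apply, hr]
    ring
  have e1 : ∑ i, ((A.mulVec x' - b) i) ^ 2
      = (∑ i, r i ^ 2) + 2 * (∑ i, r i * A.mulVec d i) + ∑ i, (A.mulVec d i) ^ 2 := by
    have : ∀ i ∈ Finset.univ, ((A.mulVec x' - b) i) ^ 2
        = r i ^ 2 + 2 * (r i * A.mulVec d i) + (A.mulVec d i) ^ 2 := by
      intro i _; rw [hcoord i]; ring
    rw [Finset.sum_congr rfl this, Finset.sum_add_distrib, Finset.sum_add_distrib,
      ← Finset.mul_sum]
  have e2 : ∑ i, r i * A.mulVec d i = ∑ j, g j * d j := by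
    calc ∑ i, r i * A.mulVec d i
        = ∑ i, ∑ j, r i * (A i j * d j) := by
          refine Finset.sum_congr rfl fun i _ => ?_
          rw [hmv, Finset.mul_sum]
      _ = ∑ j, ∑ i, r i * (A i j * d j) := Finset.sum_comm
      _ = ∑ j, g j * d j := by
          refine Finset.sum_congr rfl fun j _ => ?_
          have hmvT : A.transpose.mulVec r j = ∑ i, A i j * r i := by
            simp [Matrix.mulVec, dotProduct, Matrix.transpose_apply]
          rw [hg, hmvT, Finset.sum_mul]
          refine Finset.sum_congr rfl fun i _ => ?_
          ring
  have e3 : ∑ i, (A.mulVec d i) ^ 2 ≤ ∑ j, d j ^ 2 := mulVec_sq_le A hA d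
  have hps : ∀ i ∈ Finset.univ, (x' i - y i) ^ 2 / 2 + lamh lam p (x' i)
      ≤ (x i - y i) ^ 2 / 2 + lamh lam p (x i) := by
    intro i _
    have : x' i = Sf lam p (y i) := rfl
    rw [this]
    exact prox_ineq lam p hlam hp (y i) (x i)
  have hsum : (∑ i, ((x' i - y i) ^ 2 / 2 + lamh lam p (x' i)))
      ≤ ∑ i, ((x i - y i) ^ 2 / 2 + lamh lam p (x i)) := Finset.sum_le_sum hps
  rw [Finset.sum_add_distrib, Finset.sum_add_distrib] at hsum
  have hxy : ∀ i ∈ Finset.univ, (x i - y i) ^ 2 / 2 = g i ^ 2 / 2 := by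
    intro i _; rw [hy]; simp only [Pi.sub_apply]; ring
  have hx'y : ∀ i ∈ Finset.univ, (x' i - y i) ^ 2 / 2
      = (d i ^ 2 + 2 * (g i * d i) + g i ^ 2) / 2 := by
    intro i _
    rw [hy, hd]
    simp only [Pi.sub_apply]
    ring
  rw [Finset.sum_congr rfl hxy, Finset.sum_congr rfl hx'y] at hsum
  have hsplit : ∑ i, (d i ^ 2 + 2 * (g i * d i) + g i ^ 2) / 2
      = ((∑ i, d i ^ 2) + 2 * (∑ i, g i * d i) + ∑ i, g i ^ 2) / 2 := by
    rw [← Finset.sum_div, Finset.sum_add_distrib, Finset.sum_add_distrib, ← Finset.mul_sum]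
  have hgsum : ∑ i, g i ^ 2 / 2 = (∑ i, g i ^ 2) / 2 := by rw [← Finset.sum_div]
  rw [hsplit, hgsum] at hsum
  unfold Fobj
  rw [e1]
  have hb : (A.mulVec x - b) = r := hr.symm
  rw [hb]
  linarith [e3, hsum, e2]



/-- for `p < 0` with `λ² > p‖b‖₂²/(p−2)` and `x⁰ = 0`,
the IPS sequence is bounded. -/
theorem stmt18 (lam p : ℝ) (hlam : 0 < lam) (hp : p < 0)
    {m n : ℕ} (A : Matrix (Fin m) (Fin n) ℝ) (hA : specNorm A < 1)
    (b : Fin m → ℝ)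
    (hlam2 : lam ^ 2 > p * (l2 b) ^ 2 / (p - 2))
    (x : ℕ → Fin n → ℝ) (hx0 : x 0 = 0)
    (hiter : ∀ k : ℕ,
      x (k + 1) = Sp lam p (x k - A.transpose.mulVec (A.mulVec (x k) - b))) :
    (∃ R : ℝ, ∀ k : ℕ, l2 (x k) ≤ R) ∧
    ∃ t : ℝ, 0 < t ∧ ∀ k : ℕ, 1 ≤ k → ∀ i : Fin n, |x k i| < t := by
  set B : ℝ := (∑ i, b i ^ 2) / 2 with hB
  set L : ℝ := lam ^ 2 / 2 - lam ^ 2 / p with hL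
  -- The Lyapunov bound
  have hFk : ∀ k, Fobj lam p A b (x k) ≤ B := by
    intro k
    induction k with
    | zero =>
      rw [hx0]
      unfold Fobj
      have h1 : ∑ i, lamh lam p ((0 : Fin n → ℝ) i) = 0 :=
        Finset.sum_eq_zero fun i _ => by
          simp only [Pi.zero_apply]; exact lamh_zero lam p hlam hp
      have h2 : ∑ i, ((A.mulVec (0 : Fin n → ℝ) - b) i) ^ 2 = ∑ i, b i ^ 2 := by
        refine Finset.sum_congr rfl fun i _ => ?_
        rw [Matrix.mulVec_zero]
        simp only [Pi.sub_apply, Pi.zero_apply]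
        ring
      rw [h1, h2, zero_add]
    | succ k ih =>
      rw [hiter k]
      exact le_trans (ips_descent lam p hlam hp A hA b (x k)) ih
  have hquad : ∀ k, 0 ≤ (∑ i, ((A.mulVec (x k) - b) i) ^ 2) / 2 := by
    intro k
    have : 0 ≤ ∑ i, ((A.mulVec (x k) - b) i) ^ 2 :=
      Finset.sum_nonneg fun i _ => sq_nonneg _
    linarith
  have hcoord : ∀ k i, lamh lam p (x k i) ≤ B := by
    intro k i
    have h1 : lamh lam p (x k i) ≤ ∑ j, lamh lam p (x k j) :=
      Finset.single_le_sum (fun j _ => lamh_nonneg lam p hlam hp (x k j))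
        (Finset.mem_univ i)
    have h2 := hFk k
    unfold Fobj at h2
    have h3 := hquad k
    linarith
  -- B < L
  have hSb : (l2 b) ^ 2 = ∑ i, b i ^ 2 := l2_sq b
  have hBL : B < L := by
    rw [hSb] at hlam2
    have hp2 : p - 2 < 0 := by linarith
    have h2 : lam ^ 2 * (p - 2) < p * (∑ i, b i ^ 2) := by
      have := mul_lt_mul_of_neg_right hlam2 hp2
      rw [div_mul_cancel₀ _ (ne_of_lt hp2)] at this
      linarith
    rw [hB, hL]
    have hpne : p ≠ 0 := ne_of_lt hp
    have hform : lam ^ 2 / 2 - lam ^ 2 / p = lam ^ 2 * (p - 2) / (2 * p) := by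
      field_simp
    rw [hform]
    rw [lt_div_iff_of_neg (by linarith : 2 * p < 0)]
    linarith
  -- choice of t
  set δ : ℝ := (L - B) * (-p) * lam ^ (p - 2) with hδdef
  have hδ : 0 < δ :=
    mul_pos (mul_pos (by linarith) (by linarith)) (Real.rpow_pos_of_pos hlam _)
  set t : ℝ := max lam (δ ^ (1 / p)) + 1 with ht_def
  have ht1 : lam ≤ t := by
    rw [ht_def]
    have := le_max_left lam (δ ^ (1 / p))
    linarith
  have ht0 : 0 < t := lt_of_lt_of_le hlam ht1
  have hδt : δ ^ (1 / p) < t := by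
    rw [ht_def]
    have := le_max_right lam (δ ^ (1 / p))
    linarith
  have htp : t ^ p < δ := by
    have h1 : t ^ p < (δ ^ (1 / p)) ^ p :=
      Real.rpow_lt_rpow_of_neg (Real.rpow_pos_of_pos hδ _) hδt hp
    have h2 : (δ ^ (1 / p)) ^ p = δ := by
      rw [← Real.rpow_mul hδ.le, one_div, inv_mul_cancel₀ (ne_of_lt hp), Real.rpow_one]
    rwa [h2] at h1
  have hMt : B < Mf lam p t := by
    rw [Mf_big lam p hlam hp ht1]
    have hc : 0 < lam ^ (2 - p) := Real.rpow_pos_of_pos hlam _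
    have h1 : lam ^ (2 - p) * t ^ p < lam ^ (2 - p) * δ :=
      mul_lt_mul_of_pos_left htp hc
    have h2 : lam ^ (2 - p) * δ = (L - B) * (-p) := by
      rw [hδdef]
      have : lam ^ (2 - p) * lam ^ (p - 2) = 1 := by
        rw [← Real.rpow_add hlam]
        norm_num
      calc lam ^ (2 - p) * ((L - B) * (-p) * lam ^ (p - 2))
          = (L - B) * (-p) * (lam ^ (2 - p) * lam ^ (p - 2)) := by ring
        _ = (L - B) * (-p) := by rw [this, mul_one]
    rw [h2] at h1
    have hpinv : p⁻¹ < 0 := inv_neg''.mpr hp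
    have h3 := mul_lt_mul_of_neg_right h1 hpinv
    have h4 : (L - B) * (-p) * p⁻¹ = -(L - B) := by
      rw [mul_assoc, show (-p) * p⁻¹ = -1 by
        rw [neg_mul, mul_inv_cancel₀ (ne_of_lt hp)]]
      ring
    rw [h4] at h3
    have hL' : L = lam ^ 2 * 2⁻¹ - lam ^ 2 * p⁻¹ := by rw [hL]; ring
    simp only [div_eq_mul_inv]
    linarith [h3, hL']
  -- uniform coordinate bound for all k
  have hbnd : ∀ k i, |x k i| < t := by
    intro k i
    by_contra hcon
    push_neg at hcon
    have hu : lam ≤ |x k i| := le_trans ht1 hcon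
    have hmono : Mf lam p t ≤ Mf lam p |x k i| := by
      rw [Mf_big lam p hlam hp ht1, Mf_big lam p hlam hp hu]
      have h1 : |x k i| ^ p ≤ t ^ p :=
        Real.rpow_le_rpow_of_nonpos ht0 hcon hp.le
      have hc : 0 < lam ^ (2 - p) := Real.rpow_pos_of_pos hlam _
      have h2 : lam ^ (2 - p) * |x k i| ^ p ≤ lam ^ (2 - p) * t ^ p :=
        mul_le_mul_of_nonneg_left h1 hc.le
      have hpinv : p⁻¹ < 0 := inv_neg''.mpr hp
      have h3 := mul_le_mul_of_nonpos_right h2 hpinv.le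
      simp only [div_eq_mul_inv]
      linarith
    have h4 : Mf lam p (x k i) ≤ lamh lam p (x k i) := lamh_ge_M lam p hlam hp _
    rw [← Mf_abs] at h4
    have := hcoord k i
    linarith
  constructor
  · refine ⟨Real.sqrt (n * t ^ 2), fun k => ?_⟩
    unfold l2
    apply Real.sqrt_le_sqrt
    have : ∀ i ∈ Finset.univ, (x k i) ^ 2 ≤ t ^ 2 := by
      intro i _
      have h1 := hbnd k i
      have h2 : (x k i) ^ 2 = |x k i| ^ 2 := (sq_abs _).symm
      nlinarith [abs_nonneg (x k i)]
    calc ∑ i, (x k i) ^ 2 ≤ ∑ _i : Fin n, t ^ 2 := Finset.sum_le_sum this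
      _ = n * t ^ 2 := by
        rw [Finset.sum_const, Finset.card_univ, Fintype.card_fin, nsmul_eq_mul]
  · exact ⟨t, ht0, fun k _ i => hbnd k i⟩

end
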